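/- Fix integers 0 < n₁ ≤ n₂ ≤ … ≤ n_m. For every n̄-admissible composition d̄ ∈ Z_{≥0}^m there exists a DL-dense array R on Y_n̄ such that hor(R) = hb(d̄). -/

import Mathlib

/-- A composition of length `nn` is encoded as a function `ℕ → ℕ` vanishing from
index `nn` on (0-based indexing).  `IsSerpentine nn d lam mu` says that
`mu ∈ Ser^nn_{d,lam}` is a `d`-serpentine associated with `lam`. -/
def IsSerpentine (nn d : ℕ) (lam mu : ℕ → ℕ) : Prop :=
  (∀ i, nn ≤ i → lam i = 0) ∧
  (∀ i, nn ≤ i → mu i = 0) ∧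
  (∀ i, lam i ≤ mu i) ∧
  (∑ i ∈ Finset.range nn, (mu i - lam i)) = d ∧
  (∀ i j, i < j → j < nn → lam i ≤ lam j → mu i ≤ lam j) ∧
  (∀ i j, i < j → j < nn → lam j < lam i → lam i ≤ mu j → mu i = lam i)

/-- `domSum f s` is the sum of the `s` largest entries of a (finitely supported)
function `f : ℕ → ℕ`, i.e. the `s`-th partial sum of the dominant part `f₊`. -/
noncomputable def domSum (f : ℕ → ℕ) (s : ℕ) : ℕ :=
  sSup ((fun T : Finset ℕ => ∑ i ∈ T, f i) '' {T : Finset ℕ | T.card ≤ s})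

/-- `f₊ = g₊`: the dominant parts (non-increasing reorderings, padded by trailing
zeros) of the finitely supported functions `f` and `g` coincide. -/
def DomEq (f g : ℕ → ℕ) : Prop := ∀ s, domSum f s = domSum g s

/-- `f₊ ≤ g₊` in the dominance order: `|f| = |g|` and every partial sum of the
dominant part of `g` is at least the corresponding one for `f`. -/
def DomLE (f g : ℕ → ℕ) : Prop :=
  (∀ s, domSum f s ≤ domSum g s) ∧ ∃ N, ∀ s, N ≤ s → domSum f s = domSum g s

/-- The composition `(λ, d)`: append the entry `d` to a length-`n` composition. -/
def appendComp (n : ℕ) (lam : ℕ → ℕ) (d : ℕ) : ℕ → ℕ :=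
  fun i => if i < n then lam i else if i = n then d else 0

/-- The composition `(d₁, …, d_m)`: truncate `d` to its first `m` entries. -/
def truncComp (m : ℕ) (d : ℕ → ℕ) : ℕ → ℕ := fun i => if i < m then d i else 0

/-- A chain of iterated serpentines `μ⁽⁰⁾ = (0)`, `μ⁽ʲ⁾ ∈ Ser^{n_j}_{d_j, μ⁽ʲ⁻¹⁾}`. -/
def SerpChain (n : ℕ → ℕ) (m : ℕ) (d : ℕ → ℕ) (μ : ℕ → ℕ → ℕ) : Prop :=
  (∀ i, μ 0 i = 0) ∧ ∀ j, j < m → IsSerpentine (n j) (d j) (μ j) (μ (j + 1))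

/-- `d̄ ∈ Z_{≥0}^m` is `n̄`-admissible: for each `s < m` the number of nonzero
entries among `d_0, …, d_s` is at most `n_s`. -/
def NAdmissible (n : ℕ → ℕ) (m : ℕ) (d : ℕ → ℕ) : Prop :=
  ∀ s, s < m → ((Finset.range (s + 1)).filter (fun j => d j ≠ 0)).card ≤ n s

/-- Cells are pairs `(i, j)` (row `i`, column `j`, both 0-based); the Young diagram
`Y_n̄` consists of the cells with `j < m` and `i < n j`.  `IsSCorner n m Rr Rc c`
says that, after removing the rows in `Rr` and the columns in `Rc` from `Y_n̄`,
the cell `c` is a corner of the remaining (renumbered) Young diagram: it is the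
lowest remaining cell of its column and the leftmost remaining cell of its row. -/
def IsSCorner (n : ℕ → ℕ) (m : ℕ) (Rr Rc : Set ℕ) (c : ℕ × ℕ) : Prop :=
  c.2 < m ∧ c.1 < n c.2 ∧ c.1 ∉ Rr ∧ c.2 ∉ Rc ∧
  (∀ i, c.1 < i → i < n c.2 → i ∈ Rr) ∧
  (∀ j, j < c.2 → j ∉ Rc → n j ≤ c.1)

/-- An execution of the thin-hook removal process on `Y_n̄`: a list of cells, each
of which is a corner of the diagram remaining after deleting the rows and columns
of the previously recorded cells, such that at the end every cell of `Y_n̄` lies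
in a removed row or in a removed column (the diagram is empty). -/
def IsExec (n : ℕ → ℕ) (m : ℕ) (l : List (ℕ × ℕ)) : Prop :=
  (∀ t (ht : t < l.length),
    IsSCorner n m {i | ∃ c ∈ l.take t, c.1 = i} {j | ∃ c ∈ l.take t, c.2 = j}
      (l.get ⟨t, ht⟩)) ∧
  (∀ i j, j < m → i < n j → (∃ c ∈ l, c.1 = i) ∨ (∃ c ∈ l, c.2 = j))

/-- `S` is the set of staircase corners of `Y_n̄`: the recorded set of some
execution of the thin-hook removal process. -/
def IsScSet (n : ℕ → ℕ) (m : ℕ) (S : Set (ℕ × ℕ)) : Prop :=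
  ∃ l : List (ℕ × ℕ), IsExec n m l ∧ S = {c | c ∈ l}

/-- The partial order on staircase corners: `(i,j) ⪯ (i',j')` iff `i ≤ i'` and
`j' ≤ j` (to increase, move down and to the left). -/
def ScLE (c c' : ℕ × ℕ) : Prop := c.1 ≤ c'.1 ∧ c'.2 ≤ c.2

/-- A DL-dense array: an array supported on the staircase corners `S` which is
order-preserving for the staircase-corner order. -/
def DLDense (S : Set (ℕ × ℕ)) (R : ℕ × ℕ → ℕ) : Prop :=
  (∀ c, c ∉ S → R c = 0) ∧ ∀ c c', c ∈ S → c' ∈ S → ScLE c c' → R c ≤ R c'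

/-- Vertical weight of an array: the sum of the entries in column `j`. -/
def vrtW (n : ℕ → ℕ) (R : ℕ × ℕ → ℕ) (j : ℕ) : ℕ := ∑ i ∈ Finset.range (n j), R (i, j)

/-- Horizontal weight of an array: the sum of the entries in row `i`. -/
def horW (m : ℕ) (R : ℕ × ℕ → ℕ) (i : ℕ) : ℕ := ∑ j ∈ Finset.range m, R (i, j)


section ExecAux

variable {n : ℕ → ℕ} {m : ℕ} {l : List (ℕ × ℕ)}

lemma exec_get_mem_take {s t : ℕ} (hst : s < t) (hs : s < l.length) :
    l.get ⟨s, hs⟩ ∈ l.take t := by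
  rw [List.mem_take_iff_getElem]
  exact ⟨s, by omega, rfl⟩

lemma exec_take_index {t : ℕ} {c : ℕ × ℕ} (h : c ∈ l.take t) :
    ∃ s, ∃ hs : s < l.length, s < t ∧ l.get ⟨s, hs⟩ = c := by
  rw [List.mem_take_iff_getElem] at h
  obtain ⟨i, hi, he⟩ := h
  exact ⟨i, by omega, by omega, he⟩

lemma exec_index {c : ℕ × ℕ} (h : c ∈ l) :
    ∃ s, ∃ hs : s < l.length, l.get ⟨s, hs⟩ = c := by
  rw [List.mem_iff_getElem] at h
  obtain ⟨i, hi, he⟩ := h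
  exact ⟨i, hi, he⟩

lemma exec_basic (hexec : IsExec n m l) {c : ℕ × ℕ} (hc : c ∈ l) :
    c.2 < m ∧ c.1 < n c.2 := by
  obtain ⟨s, hs, rfl⟩ := exec_index hc
  exact ⟨(hexec.1 s hs).1, (hexec.1 s hs).2.1⟩

lemma exec_row_ne_of_lt (hexec : IsExec n m l) {s t : ℕ} (hs : s < l.length)
    (ht : t < l.length) (hst : s < t) :
    (l.get ⟨s, hs⟩).1 ≠ (l.get ⟨t, ht⟩).1 := by
  intro h
  exact (hexec.1 t ht).2.2.1 ⟨l.get ⟨s, hs⟩, exec_get_mem_take hst hs, h⟩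

lemma exec_col_ne_of_lt (hexec : IsExec n m l) {s t : ℕ} (hs : s < l.length)
    (ht : t < l.length) (hst : s < t) :
    (l.get ⟨s, hs⟩).2 ≠ (l.get ⟨t, ht⟩).2 := by
  intro h
  exact (hexec.1 t ht).2.2.2.1 ⟨l.get ⟨s, hs⟩, exec_get_mem_take hst hs, h⟩

lemma exec_row_eq (hexec : IsExec n m l) {c c' : ℕ × ℕ} (hc : c ∈ l) (hc' : c' ∈ l)
    (h : c.1 = c'.1) : c = c' := by
  obtain ⟨s, hs, rfl⟩ := exec_index hc
  obtain ⟨t, ht, rfl⟩ := exec_index hc'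
  rcases lt_trichotomy s t with hst | hst | hst
  · exact absurd h (exec_row_ne_of_lt hexec hs ht hst)
  · subst hst; rfl
  · exact absurd h.symm (exec_row_ne_of_lt hexec ht hs hst)

lemma exec_col_eq (hexec : IsExec n m l) {c c' : ℕ × ℕ} (hc : c ∈ l) (hc' : c' ∈ l)
    (h : c.2 = c'.2) : c = c' := by
  obtain ⟨s, hs, rfl⟩ := exec_index hc
  obtain ⟨t, ht, rfl⟩ := exec_index hc'
  rcases lt_trichotomy s t with hst | hst | hst
  · exact absurd h (exec_col_ne_of_lt hexec hs ht hst)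
  · subst hst; rfl
  · exact absurd h.symm (exec_col_ne_of_lt hexec ht hs hst)

/-- F-b: every row strictly between a corner and the bottom of its column is the
row of a corner in a strictly earlier column. -/
lemma exec_fb (hexec : IsExec n m l) {c : ℕ × ℕ} (hc : c ∈ l) {i : ℕ}
    (h1 : c.1 < i) (h2 : i < n c.2) :
    ∃ c' ∈ l, c'.1 = i ∧ c'.2 < c.2 := by
  obtain ⟨t, ht, rfl⟩ := exec_index hc
  set c := l.get ⟨t, ht⟩ with hcdef
  obtain ⟨e, hel, hei⟩ := (hexec.1 t ht).2.2.2.2.1 i h1 h2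
  obtain ⟨s, hs, hst, rfl⟩ := exec_take_index hel
  set e := l.get ⟨s, hs⟩ with hedef
  refine ⟨e, List.get_mem l _, hei, ?_⟩
  rcases lt_trichotomy e.2 c.2 with h | h | h
  · exact h
  · exact absurd h (exec_col_ne_of_lt hexec hs ht hst)
  · exfalso
    have hnotc : c.2 ∉ {j | ∃ f ∈ l.take s, f.2 = j} := by
      rintro ⟨f, hfl, hf2⟩
      obtain ⟨u, hu, hus, rfl⟩ := exec_take_index hfl
      exact exec_col_ne_of_lt hexec hu ht (by omega) hf2
    have hcon := (hexec.1 s hs).2.2.2.2.2 c.2 h hnotc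
    rw [← hedef] at hcon
    omega

/-- F-c: if a column of the diagram contains no corner, then every row of that
column is the row of a corner in a strictly earlier column. -/
lemma exec_fc (hexec : IsExec n m l) {j : ℕ} (hj : j < m)
    (hno : ∀ c ∈ l, c.2 ≠ j) {i : ℕ} (hi : i < n j) :
    ∃ c ∈ l, c.1 = i ∧ c.2 < j := by
  rcases hexec.2 i j hj hi with ⟨c, hc, hci⟩ | ⟨c, hc, hcj⟩
  · refine ⟨c, hc, hci, ?_⟩
    have hne := hno c hc
    rcases lt_trichotomy c.2 j with h | h | h
    · exact h
    · exact absurd h hne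
    · exfalso
      obtain ⟨t, ht, rfl⟩ := exec_index hc
      have hnotc : j ∉ {jj | ∃ f ∈ l.take t, f.2 = jj} := by
        rintro ⟨f, hfl, hf2⟩
        obtain ⟨u, hu, hut, rfl⟩ := exec_take_index hfl
        exact hno _ (List.get_mem l _) hf2
      have := (hexec.1 t ht).2.2.2.2.2 j h hnotc
      omega
  · exact absurd hcj (hno c hc)

end ExecAux

/-- Corollary 1.25.  For every `n̄`-admissible composition `d̄`
there is a DL-dense array `R` with `hor(R) = hb(d̄)`.  Here `hb(d̄) = μ⁽ᵐ⁾` for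
the unique chain of iterated serpentines with `μ⁽ᵐ⁾₊ = (d₁,…,d_m)₊`. -/
theorem hb_is_horizontal_weight_of_dl_dense (m : ℕ) (hm : 0 < m)
    (n : ℕ → ℕ) (hn0 : 0 < n 0)
    (hmono : ∀ j k, j ≤ k → k < m → n j ≤ n k)
    (S : Set (ℕ × ℕ)) (hS : IsScSet n m S)
    (d : ℕ → ℕ) (hdsupp : ∀ j, m ≤ j → d j = 0) (hadm : NAdmissible n m d)
    (μ : ℕ → ℕ → ℕ) (hchain : SerpChain n m d μ)
    (hdom : DomEq (μ m) (truncComp m d)) :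
    ∃ R : ℕ × ℕ → ℕ, DLDense S R ∧ ∀ i, horW m R i = μ m i := by
  classical
  obtain ⟨l, hexec, rfl⟩ := hS
  -- Row-support invariant: `μ s` is supported on rows of corners of column `< s`.
  have hA : ∀ s, s ≤ m → ∀ i, (¬ ∃ c ∈ l, c.1 = i ∧ c.2 < s) → μ s i = 0 := by
    intro s
    induction s with
    | zero => exact fun _ i _ => hchain.1 i
    | succ s ih =>
      intro hsm i hi
      have hsm' : s < m := hsm
      obtain ⟨hl0, hm0, hle, hsum, hiii, hiv⟩ := hchain.2 s hsm'
      have hiP : ¬ ∃ c ∈ l, c.1 = i ∧ c.2 < s := by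
        rintro ⟨c, hc, h1, h2⟩
        exact hi ⟨c, hc, h1, by omega⟩
      by_cases hns : n s ≤ i
      · exact hm0 i hns
      push_neg at hns
      by_cases hcol : ∃ c ∈ l, c.2 = s
      · obtain ⟨c, hcl, hcs⟩ := hcol
        have hir : i ≠ c.1 := by
          intro h
          exact hi ⟨c, hcl, h.symm, by omega⟩
        have hnotlt : ¬ c.1 < i := by
          intro h
          obtain ⟨c', hc'l, h1, h2⟩ := exec_fb hexec hcl h (by rw [hcs]; exact hns)
          exact hi ⟨c', hc'l, h1, by omega⟩
        have hic : i < c.1 := by omega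
        have hc1z : μ s c.1 = 0 := by
          apply ih (le_of_lt hsm')
          rintro ⟨c', hc'l, h1, h2⟩
          have hcc : c' = c := exec_row_eq hexec hc'l hcl h1
          rw [hcc] at h2
          omega
        have hiz : μ s i = 0 := ih (le_of_lt hsm') i hiP
        have hcn : c.1 < n s := by
          have := (exec_basic hexec hcl).2
          rwa [hcs] at this
        have := hiii i c.1 hic hcn (by rw [hiz, hc1z])
        omega
      · push_neg at hcol
        obtain ⟨c, hcl, h1, h2⟩ := exec_fc hexec hsm' hcol hns
        exact absurd ⟨c, hcl, h1, by omega⟩ hi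
  -- Preservation of pointwise inequalities along the serpentine chain.
  have hPres : ∀ a b : ℕ, a < b → ∀ s, (∀ v, s ≤ v → v < m → b < n v) →
      μ s a ≤ μ s b → ∀ u, s ≤ u → u ≤ m → μ u a ≤ μ u b := by
    intro a b hab s hbv hs u hu
    induction u, hu using Nat.le_induction with
    | base => exact fun _ => hs
    | succ u hu ih =>
      intro hum
      have hum' : u < m := by omega
      obtain ⟨hl0, hm0, hle, hsum, hiii, hiv⟩ := hchain.2 u hum'
      exact le_trans (hiii a b hab (hbv u hu hum') (ih (by omega))) (hle b)
  -- Monotonicity of `μ m` along the staircase-corner order.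
  have hB : ∀ c ∈ l, ∀ c' ∈ l, c.1 < c'.1 → c'.2 < c.2 → μ m c.1 ≤ μ m c'.1 := by
    intro c hcl c' hc'l hrow hcol
    have hjm : c.2 < m := (exec_basic hexec hcl).1
    have hj'm : c'.2 < m := (exec_basic hexec hc'l).1
    have hbn : ∀ v, c.2 + 1 ≤ v → v < m → c'.1 < n v := by
      intro v hv1 hv2
      exact lt_of_lt_of_le (exec_basic hexec hc'l).2
        (hmono c'.2 v (by omega) hv2)
    obtain ⟨hl0, hm0, hle, hsum, hiii, hiv⟩ := hchain.2 c.2 hjm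
    have hz : μ c.2 c.1 = 0 := by
      apply hA c.2 (le_of_lt hjm)
      rintro ⟨e, hel, h1, h2⟩
      have hce : e = c := exec_row_eq hexec hel hcl h1
      rw [hce] at h2
      omega
    have hstep : μ (c.2 + 1) c.1 ≤ μ (c.2 + 1) c'.1 := by
      have h1 : c'.1 < n c.2 := by
        have := (exec_basic hexec hc'l).2
        exact lt_of_lt_of_le this (hmono c'.2 c.2 (le_of_lt hcol) hjm)
      exact le_trans (hiii c.1 c'.1 hrow h1 (by rw [hz]; exact Nat.zero_le _)) (hle c'.1)
    exact hPres c.1 c'.1 hrow (c.2 + 1) hbn hstep m hjm m.le_refl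
  refine ⟨fun c => if c ∈ l then μ m c.1 else 0, ⟨?_, ?_⟩, ?_⟩
  · intro c hc
    simp only [Set.mem_setOf_eq] at hc
    exact if_neg hc
  · intro c c' hc hc' hlece
    simp only [Set.mem_setOf_eq] at hc hc'
    show (if c ∈ l then μ m c.1 else 0) ≤ (if c' ∈ l then μ m c'.1 else 0)
    rw [if_pos hc, if_pos hc']
    obtain ⟨h1, h2⟩ := hlece
    rcases eq_or_lt_of_le h1 with heq | hlt
    · rw [heq]
    · rcases eq_or_lt_of_le h2 with heq2 | hlt2
      · have hcc : c' = c := exec_col_eq hexec hc' hc heq2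
        rw [hcc] at hlt
        omega
      · exact hB c hc c' hc' hlt hlt2
  · intro i
    show (∑ j ∈ Finset.range m, if ((i, j) : ℕ × ℕ) ∈ l then μ m i else 0) = μ m i
    by_cases hrow : ∃ c ∈ l, c.1 = i
    · obtain ⟨c, hcl, hci⟩ := hrow
      have hic : ((i, c.2) : ℕ × ℕ) = c := by
        rw [← hci]
      rw [Finset.sum_eq_single_of_mem c.2
          (Finset.mem_range.mpr (exec_basic hexec hcl).1)]
      · rw [if_pos (show ((i, c.2) : ℕ × ℕ) ∈ l from hic ▸ hcl)]
      · intro j hj hne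
        apply if_neg
        intro hmem
        have hcc : ((i, j) : ℕ × ℕ) = c := exec_row_eq hexec hmem hcl hci.symm
        exact hne (by rw [← hcc])
    · push_neg at hrow
      have h0 : μ m i = 0 := by
        apply hA m m.le_refl
        rintro ⟨c, hc, h1, _⟩
        exact hrow c hc h1
      rw [h0, Finset.sum_eq_zero]
      intro j hj
      apply if_neg
      intro hmem
      exact hrow _ hmem rfl
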